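/- Let (X,d) be a metric space, Ω ⊂ X bounded, D ⊂ X compact, u continuous on closure(Ω), t > 0. Define v(y) := inf_{z ∈ closure(Ω)} ( u(z) + d(z,y)²/(2t) ) for y ∈ D and v(y) := −∞ otherwise, and φ(x) := inf_{y ∈ D} ( −t·v(y) + d(x,y)²/2 ). Then φ(x) = −t·u(x) for every x in the 2-contact set R₂(D,Ω,u,t) := { x ∈ closure(Ω) : ∃ y ∈ D, inf_{closure(Ω)}(u + d(·,y)²/(2t)) = u(x) + d(x,y)²/(2t) }, and φ(x) ≥ −t·u(x) for every x ∈ Ω. -/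
import Mathlib


/-- With `v(y) := inf_{z ∈ closure Ω}(u z + dist z y²/(2t))` for `y ∈ D` and
`φ(x) := inf_{y ∈ D}(-t v(y) + dist x y²/2)` (the c-transform of `t·v`), the function
`φ` equals `-t·u` on the 2-contact set `R₂(D,Ω,u,t)` and dominates `-t·u` on `Ω`. -/
theorem c_concave_representative_two_contact {X : Type*} [MetricSpace X]
    (Ω D : Set X) (hΩ : Bornology.IsBounded Ω) (hΩne : Ω.Nonempty)
    (hD : D.Nonempty) (hDc : IsCompact D)
    (u : X → ℝ) (hu : ContinuousOn u (closure Ω)) (t : ℝ) (ht : 0 < t)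
    (hbdd : ∀ y : X, BddBelow ((fun z => u z + dist z y ^ 2 / (2 * t)) '' closure Ω))
    (v : X → ℝ)
    (hv : ∀ y ∈ D, v y = sInf ((fun z => u z + dist z y ^ 2 / (2 * t)) '' closure Ω))
    (φ : X → ℝ)
    (hφ : ∀ x, φ x = sInf ((fun y => -t * v y + dist x y ^ 2 / 2) '' D)) :
    (∀ x ∈ {x | x ∈ closure Ω ∧ ∃ y ∈ D,
        sInf ((fun z => u z + dist z y ^ 2 / (2 * t)) '' closure Ω)
          = u x + dist x y ^ 2 / (2 * t)},
      φ x = -t * u x) ∧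
    (∀ x ∈ Ω, -t * u x ≤ φ x) := by
  -- key lower bound: for x in closure Ω and y ∈ D, each term is ≥ -t u x
  have key : ∀ x ∈ closure Ω, ∀ y ∈ D, -t * u x ≤ -t * v y + dist x y ^ 2 / 2 := by
    intro x hx y hy
    have hvle : v y ≤ u x + dist x y ^ 2 / (2 * t) := by
      rw [hv y hy]
      exact csInf_le (hbdd y) ⟨x, hx, rfl⟩
    have h1 : -t * (u x + dist x y ^ 2 / (2 * t)) ≤ -t * v y := by
      have := mul_le_mul_of_nonpos_left hvle (by linarith : -t ≤ 0)
      linarith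
    have h2 : -t * (u x + dist x y ^ 2 / (2 * t)) + dist x y ^ 2 / 2 = -t * u x := by
      field_simp
      ring
    linarith
  have hge : ∀ x ∈ closure Ω, -t * u x ≤ φ x := by
    intro x hx
    rw [hφ x]
    apply le_csInf (hD.image _)
    rintro b ⟨y, hy, rfl⟩
    exact key x hx y hy
  constructor
  · rintro x ⟨hx, y, hy, hcontact⟩
    refine le_antisymm ?_ (hge x hx)
    rw [hφ x]
    have hle : -t * v y + dist x y ^ 2 / 2 ≤ -t * u x := by
      rw [hv y hy, hcontact]
      have h2 : -t * (u x + dist x y ^ 2 / (2 * t)) + dist x y ^ 2 / 2 = -t * u x := by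
        field_simp
        ring
      linarith
    have hbb : BddBelow ((fun y => -t * v y + dist x y ^ 2 / 2) '' D) := by
      refine ⟨-t * u x, ?_⟩
      rintro b ⟨z, hz, rfl⟩
      exact key x hx z hz
    exact le_trans (csInf_le hbb ⟨y, hy, rfl⟩) hle
  · exact fun x hx => hge x (subset_closure hx)
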